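/- Let M be a 4×4 complex matrix satisfying: (i) M₃₁ = M₃₂ = M₄₁ = M₄₂ = 0; (ii) M = Ĵ₄ · conj(M)ᵗ · Ĵ₄; (iii) Mᵗ J₄ M = J₄. Then M is upper triangular with M₂₃ = 0; the entries M₂₂ and M₃₃ are real and satisfy M₂₂M₃₃ = 1; M₂₄ = conj(M₁₂), M₃₄ = conj(M₁₃), M₄₄ = conj(M₁₁); |M₁₁| = 1; conj(M₁₃)·M₂₂ = −M₁₂·conj(M₁₁); and conj(M₁₄)·M₂₂ = |M₁₂|². -/

import Mathlib

open Matrix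

noncomputable section

/-- `J₄`: the 4×4 matrix with ones on the antidiagonal. -/
def J4 : Matrix (Fin 4) (Fin 4) ℂ :=
  !![0, 0, 0, 1;
     0, 0, 1, 0;
     0, 1, 0, 0;
     1, 0, 0, 0]

/-- `Ĵ₄`: the permutation matrix exchanging the first and fourth coordinates. -/
def Jhat4 : Matrix (Fin 4) (Fin 4) ℂ :=
  !![0, 0, 0, 1;
     0, 1, 0, 0;
     0, 0, 1, 0;
     1, 0, 0, 0]

/-- Entrywise complex conjugation of a matrix. -/
def conjM {m n : Type*} (M : Matrix m n ℂ) : Matrix m n ℂ := M.map (starRingEnd ℂ)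

/-- structure of a 4×4 matrix `M` with vanishing lower-left 2×2 block satisfying
`M = Ĵ₄ conj(M)ᵗ Ĵ₄` and `Mᵗ J₄ M = J₄`. -/
theorem stmt15 (M : Matrix (Fin 4) (Fin 4) ℂ)
    (h1 : M 2 0 = 0 ∧ M 2 1 = 0 ∧ M 3 0 = 0 ∧ M 3 1 = 0)
    (h2 : M = Jhat4 * (conjM M)ᵀ * Jhat4)
    (h3 : Mᵀ * J4 * M = J4) :
    (M 1 0 = 0 ∧ M 2 0 = 0 ∧ M 2 1 = 0 ∧ M 3 0 = 0 ∧ M 3 1 = 0 ∧ M 3 2 = 0) ∧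
    M 1 2 = 0 ∧
    ((M 1 1).im = 0 ∧ (M 2 2).im = 0) ∧
    M 1 1 * M 2 2 = 1 ∧
    M 1 3 = starRingEnd ℂ (M 0 1) ∧
    M 2 3 = starRingEnd ℂ (M 0 2) ∧
    M 3 3 = starRingEnd ℂ (M 0 0) ∧
    ‖M 0 0‖ = 1 ∧
    starRingEnd ℂ (M 0 2) * M 1 1 = -(M 0 1 * starRingEnd ℂ (M 0 0)) ∧
    starRingEnd ℂ (M 0 3) * M 1 1 = ((‖M 0 1‖ ^ 2 : ℝ) : ℂ) := by
  obtain ⟨h20, h21, h30, h31⟩ := h1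
  have e : ∀ i j, M i j = (Jhat4 * (conjM M)ᵀ * Jhat4) i j := fun i j => by rw [← h2]
  have f : ∀ i j, (Mᵀ * J4 * M) i j = J4 i j := fun i j => by rw [h3]
  have e11 := e 1 1
  have e10 := e 1 0
  have e13 := e 1 3
  have e12 := e 1 2
  have e32 := e 3 2
  have e22 := e 2 2
  have e23 := e 2 3
  have e33 := e 3 3
  simp [Jhat4, conjM, Matrix.mul_apply, Matrix.vecMul, dotProduct,
    Matrix.vecHead, Matrix.vecTail, Fin.sum_univ_four] at e11 e10 e13 e12 e32 e22 e23 e33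
  have f03 := f 0 3
  have f12 := f 1 2
  have f13 := f 1 3
  have f33 := f 3 3
  simp [Jhat4, J4, Matrix.mul_apply, Matrix.vecHead, Matrix.vecTail,
    Fin.sum_univ_four] at f03 f12 f13 f33
  have m10 : M 1 0 = 0 := by rw [e10, h31, map_zero]
  have m12 : M 1 2 = 0 := by rw [e12, h21, map_zero]
  have m32 : M 3 2 = 0 := by rw [e32, h20, map_zero]
  have im11 : (M 1 1).im = 0 := Complex.conj_eq_iff_im.mp e11.symm
  have im22 : (M 2 2).im = 0 := Complex.conj_eq_iff_im.mp e22.symm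
  -- f03 : entries of MᵀJM at (0,3)
  simp only [h31, h21, h20, h30, m10, m32, m12, zero_mul, mul_zero, add_zero,
    zero_add] at f03 f12 f13 f33
  -- clean the products with zeros
  have k03 : M 0 0 * M 3 3 = 1 := by linear_combination f03
  have k12 : M 1 1 * M 2 2 = 1 := by linear_combination f12
  have k13 : M 1 1 * M 2 3 + M 0 1 * M 3 3 = 0 := by linear_combination f13
  have k33 : M 1 3 * M 2 3 + M 2 3 * M 1 3 + M 0 3 * M 3 3 + M 3 3 * M 0 3 = 0 := by
    linear_combination f33
  -- substitute conjugate relations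
  rw [e33] at k03 k13
  rw [e33, e13, e23] at k33
  rw [e23] at k13
  have abs00 : ‖M 0 0‖ = 1 := by
    have hn : (Complex.normSq (M 0 0) : ℂ) = 1 := by
      rw [← Complex.mul_conj]; exact k03
    have hn' : Complex.normSq (M 0 0) = 1 := by exact_mod_cast hn
    have h : ‖M 0 0‖ ^ 2 = 1 := by rw [Complex.sq_norm, hn']
    nlinarith [norm_nonneg (M 0 0)]
  have goal9 : starRingEnd ℂ (M 0 2) * M 1 1 = -(M 0 1 * starRingEnd ℂ (M 0 0)) := by
    linear_combination k13
  -- conjugates of the key equations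
  have k13c : M 1 1 * M 0 2 + starRingEnd ℂ (M 0 1) * M 0 0 = 0 := by
    have hc := congrArg (starRingEnd ℂ) k13
    simp only [map_add, _root_.map_mul, map_zero, Complex.conj_conj, ← e11] at hc
    linear_combination hc
  have k33c : starRingEnd ℂ (M 0 1) * starRingEnd ℂ (M 0 2) +
      starRingEnd ℂ (M 0 2) * starRingEnd ℂ (M 0 1) +
      M 0 3 * starRingEnd ℂ (M 0 0) + starRingEnd ℂ (M 0 0) * M 0 3 = 0 := k33
  have k33cc : M 0 1 * M 0 2 + M 0 2 * M 0 1 +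
      starRingEnd ℂ (M 0 3) * M 0 0 + M 0 0 * starRingEnd ℂ (M 0 3) = 0 := by
    have := congrArg (starRingEnd ℂ) k33c
    simpa using this
  have c00 : M 0 0 * starRingEnd ℂ (M 0 0) = 1 := k03
  have goal10 : starRingEnd ℂ (M 0 3) * M 1 1 = ((‖M 0 1‖ ^ 2 : ℝ) : ℂ) := by
    have habs : ((‖M 0 1‖ ^ 2 : ℝ) : ℂ) = M 0 1 * starRingEnd ℂ (M 0 1) := by
      rw [Complex.sq_norm]
      push_cast [← Complex.mul_conj]
      ring
    rw [habs]
    linear_combination (M 1 1 * starRingEnd ℂ (M 0 0) / 2) * k33cc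
      - (M 0 1 * starRingEnd ℂ (M 0 0)) * k13c
      + (M 0 1 * starRingEnd ℂ (M 0 1) - starRingEnd ℂ (M 0 3) * M 1 1) * c00
  exact ⟨⟨m10, h20, h21, h30, h31, m32⟩, m12, ⟨im11, im22⟩, k12, e13, e23, e33, abs00,
    goal9, goal10⟩
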